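/- Counting lemma: Let (X, f_{1,∞}) be an NDS, K ⊆ X, ε > 0, and φ continuous with s > ‖φ‖_∞. If M^P(f_{1,∞}, K, φ, ε, s) = +∞, then for any N ∈ ℕ and any interval (a,b) ⊆ [0,∞) with a ≥ 0 and a < b, there exists a finite pairwise disjoint collection of closed Bowen balls {B̄_{n_i}(x_i, ε)}_i with x_i ∈ K, n_i ≥ N for all i, and a < Σ_i exp(−s n_i + S_{n_i}φ(x_i)) < b. -/
import Mathlib


open Filter Set MeasureTheory Topology ENNReal

noncomputable section

variable {X : Type*}

/-- `traj f n = f (n-1) ∘ ⋯ ∘ f 0`, i.e. the time-`n` map `f_1^n` of the NDS. -/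
def traj (f : ℕ → X → X) : ℕ → X → X
  | 0 => id
  | n + 1 => f n ∘ traj f n

/-- Birkhoff-type sum `S_n φ (x) = ∑_{i<n} φ(f_1^i x)`. -/
def birk (f : ℕ → X → X) (φ : X → ℝ) (n : ℕ) (x : X) : ℝ :=
  ∑ i ∈ Finset.range n, φ (traj f i x)

variable [MetricSpace X]

/-- Open Bowen ball `B_n(x, ε)`. -/
def bowenBall (f : ℕ → X → X) (n : ℕ) (ε : ℝ) (x : X) : Set X :=
  {y | ∀ i < n, dist (traj f i x) (traj f i y) < ε}

/-- Closed Bowen ball `B̄_n(x, ε)`. -/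
def bowenClosedBall (f : ℕ → X → X) (n : ℕ) (ε : ℝ) (x : X) : Set X :=
  {y | ∀ i < n, dist (traj f i x) (traj f i y) ≤ ε}

/-- `M(f, K, φ, ε, s, N)`: infimum over countable Bowen-ball covers of `K`. -/
def pesinM (f : ℕ → X → X) (K : Set X) (φ : X → ℝ) (ε s : ℝ) (N : ℕ) : ℝ≥0∞ :=
  sInf { t | ∃ (c : ℕ → X) (m : ℕ → ℕ), (∀ i, N ≤ m i) ∧
    K ⊆ ⋃ i, bowenBall f (m i) ε (c i) ∧
    t = ∑' i, ENNReal.ofReal (Real.exp (-s * (m i : ℝ) + birk f φ (m i) (c i))) }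

/-- `M(f, K, φ, ε, s) = lim_{N→∞} M(f, K, φ, ε, s, N)` (the quantity is nondecreasing in `N`). -/
def pesinMLim (f : ℕ → X → X) (K : Set X) (φ : X → ℝ) (ε s : ℝ) : ℝ≥0∞ :=
  ⨆ N, pesinM f K φ ε s N

/-- Pesin pressure at scale `ε`: critical value of `s`. -/
def pesinPressureEps (f : ℕ → X → X) (K : Set X) (φ : X → ℝ) (ε : ℝ) : ℝ :=
  sInf {s : ℝ | pesinMLim f K φ ε s = 0}

/-- Pesin (Pesin–Pitskel'/Bowen) topological pressure `P^B(f_{1,∞}, K, φ)`. -/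
def pesinPressure (f : ℕ → X → X) (K : Set X) (φ : X → ℝ) : ℝ :=
  limsup (fun ε => pesinPressureEps f K φ ε) (𝓝[>] (0 : ℝ))

/-- `M^P(f, K, φ, ε, s, N)`: supremum over disjoint families of closed Bowen balls
centered in `K` with orders `≥ N`. -/
def packM (f : ℕ → X → X) (K : Set X) (φ : X → ℝ) (ε s : ℝ) (N : ℕ) : ℝ≥0∞ :=
  sSup { t | ∃ (c : ℕ → X) (m : ℕ → ℕ) (I : Set ℕ),
    (∀ i ∈ I, c i ∈ K ∧ N ≤ m i) ∧
    (I.PairwiseDisjoint fun i => bowenClosedBall f (m i) ε (c i)) ∧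
    t = ∑' i : I, ENNReal.ofReal (Real.exp (-s * (m i.1 : ℝ) + birk f φ (m i.1) (c i.1))) }

/-- `M^P(f, K, φ, ε, s) = lim_{N→∞} M^P(f, K, φ, ε, s, N)` (nonincreasing in `N`). -/
def packMLim (f : ℕ → X → X) (K : Set X) (φ : X → ℝ) (ε s : ℝ) : ℝ≥0∞ :=
  ⨅ N, packM f K φ ε s N

/-- `M^{P̃}(f, K, φ, ε, s)`: infimum over countable covers of `K`. -/
def packMTilde (f : ℕ → X → X) (K : Set X) (φ : X → ℝ) (ε s : ℝ) : ℝ≥0∞ :=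
  sInf { t | ∃ Ks : ℕ → Set X, K ⊆ ⋃ i, Ks i ∧ t = ∑' i, packMLim f (Ks i) φ ε s }

/-- Packing pressure at scale `ε`: critical value of `s`. -/
def packPressureEps (f : ℕ → X → X) (K : Set X) (φ : X → ℝ) (ε : ℝ) : ℝ :=
  sInf {s : ℝ | packMTilde f K φ ε s = 0}

/-- Packing topological pressure `P^P(f_{1,∞}, K, φ)`. -/
def packPressure (f : ℕ → X → X) (K : Set X) (φ : X → ℝ) : ℝ :=
  limsup (fun ε => packPressureEps f K φ ε) (𝓝[>] (0 : ℝ))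

/-- `E` is `(n, ε)`-separated for the NDS. -/
def IsSeparated' (f : ℕ → X → X) (n : ℕ) (ε : ℝ) (E : Finset X) : Prop :=
  ∀ x ∈ E, ∀ y ∈ E, x ≠ y → ∃ i < n, ε < dist (traj f i x) (traj f i y)

/-- `P_n(f, Z, φ, ε)`: sup over `(n,ε)`-separated subsets of `Z`. -/
def sepSum (f : ℕ → X → X) (Z : Set X) (φ : X → ℝ) (ε : ℝ) (n : ℕ) : ℝ :=
  sSup { t | ∃ E : Finset X, ↑E ⊆ Z ∧ IsSeparated' f n ε E ∧
    t = ∑ x ∈ E, Real.exp (birk f φ n x) }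

/-- Classical topological pressure via separated sets. -/
def classicalPressureSep (f : ℕ → X → X) (Z : Set X) (φ : X → ℝ) : ℝ :=
  limsup (fun ε => limsup (fun n => Real.log (sepSum f Z φ ε n) / n) atTop) (𝓝[>] (0 : ℝ))

/-- `Q_n(f, K, φ, ε)`: infimum over `(n,ε)`-spanning sets for `K`. -/
def spanSum (f : ℕ → X → X) (K : Set X) (φ : X → ℝ) (ε : ℝ) (n : ℕ) : ℝ :=
  sInf { t | ∃ E : Finset X,
    (∀ x ∈ K, ∃ y ∈ E, ∀ i < n, dist (traj f i y) (traj f i x) ≤ ε) ∧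
    t = ∑ x ∈ E, Real.exp (birk f φ n x) }

/-- Classical topological pressure via spanning sets. -/
def classicalPressureSpan (f : ℕ → X → X) (K : Set X) (φ : X → ℝ) : ℝ :=
  limsup (fun ε => limsup (fun n => Real.log (spanSum f K φ ε n) / n) atTop) (𝓝[>] (0 : ℝ))

/-- `Λ_{ε,N}(f, K, φ)`: infimum over countable covers of `K` by Bowen balls of order `N`. -/
def capLambda (f : ℕ → X → X) (K : Set X) (φ : X → ℝ) (ε : ℝ) (N : ℕ) : ℝ≥0∞ :=
  sInf { t | ∃ c : ℕ → X, K ⊆ ⋃ i, bowenBall f N ε (c i) ∧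
    t = ∑' i, ENNReal.ofReal (Real.exp (birk f φ N (c i))) }

/-- Upper capacity topological pressure `CP̄(f_{1,∞}, K, φ)`. -/
def upperCapPressure (f : ℕ → X → X) (K : Set X) (φ : X → ℝ) : ℝ :=
  limsup (fun ε =>
    limsup (fun N => Real.log (capLambda f K φ ε N).toReal / N) atTop) (𝓝[>] (0 : ℝ))

/-- Upper measure-theoretic local pressure `P̄_μ(f_{1,∞}, x, φ)`. -/
def upperLocalPressure [MeasurableSpace X] (μ : Measure X) (f : ℕ → X → X) (φ : X → ℝ)
    (x : X) : ℝ :=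
  limsup (fun ε => limsup
    (fun n => (-Real.log ((μ (bowenBall f n ε x)).toReal) + birk f φ n x) / n) atTop)
    (𝓝[>] (0 : ℝ))

/-- `μ` is `f_{1,∞}`-invariant: every map of the sequence preserves `μ`. -/
def IsInvSeq [MeasurableSpace X] (μ : Measure X) (f : ℕ → X → X) : Prop :=
  ∀ k, ∀ A : Set X, MeasurableSet A → μ (f k ⁻¹' A) = μ A

/-- Auxiliary: from a finite family of small positive terms with sum exceeding `a`,
extract a subfamily with sum in `(a, b)`. -/
lemma exists_subset_sum_mem_Ioo {a b : ℝ} (ha : 0 ≤ a) (g : ℕ → ℝ) (J : Finset ℕ)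
    (hpos : ∀ i ∈ J, 0 < g i) (hlt : ∀ i ∈ J, g i < b - a)
    (hsum : a < ∑ i ∈ J, g i) :
    ∃ J' ⊆ J, a < ∑ i ∈ J', g i ∧ ∑ i ∈ J', g i < b := by
  induction J using Finset.strongInduction with
  | _ J ih =>
    by_cases hcase : ∃ i ∈ J, a < ∑ j ∈ J.erase i, g j
    · obtain ⟨i, hi, hlt'⟩ := hcase
      obtain ⟨J', hsub, h1, h2⟩ := ih (J.erase i) (Finset.erase_ssubset hi)
        (fun j hj => hpos j (Finset.mem_of_mem_erase hj))
        (fun j hj => hlt j (Finset.mem_of_mem_erase hj)) hlt'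
      exact ⟨J', hsub.trans (Finset.erase_subset i J), h1, h2⟩
    · push_neg at hcase
      obtain ⟨i, hi⟩ : J.Nonempty := by
        by_contra hne
        rw [Finset.not_nonempty_iff_eq_empty] at hne
        simp [hne] at hsum; linarith
      refine ⟨J, le_refl _, hsum, ?_⟩
      have h1 : ∑ j ∈ J.erase i, g j ≤ a := hcase i hi
      have h2 : ∑ j ∈ J, g j = g i + ∑ j ∈ J.erase i, g j := (Finset.add_sum_erase J g hi).symm
      have h3 : g i < b - a := hlt i hi
      linarith

/-- counting lemma for packing sums. -/
theorem packing_counting_lemma [CompactSpace X]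
    (f : ℕ → X → X) (hf : ∀ i, Continuous (f i))
    (K : Set X) (φ : C(X, ℝ)) (ε s : ℝ) (hε : 0 < ε) (hs : ‖φ‖ < s)
    (h : packMLim f K ⇑φ ε s = ⊤) :
    ∀ (N : ℕ) (a b : ℝ), 0 ≤ a → a < b →
      ∃ (J : Finset ℕ) (c : ℕ → X) (m : ℕ → ℕ),
        (∀ i ∈ J, c i ∈ K ∧ N ≤ m i) ∧
        ((J : Set ℕ).PairwiseDisjoint fun i => bowenClosedBall f (m i) ε (c i)) ∧
        a < ∑ i ∈ J, Real.exp (-s * (m i : ℝ) + birk f ⇑φ (m i) (c i)) ∧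
        ∑ i ∈ J, Real.exp (-s * (m i : ℝ) + birk f ⇑φ (m i) (c i)) < b := by
  intro N a b ha hab
  set δ := s - ‖φ‖ with hδdef
  have hδ : 0 < δ := sub_pos.mpr hs
  obtain ⟨n₀, hn₀⟩ := exists_nat_gt (-Real.log (b - a) / δ)
  set N' := max N n₀ with hN'
  have hbound : Real.exp (-(n₀ : ℝ) * δ) < b - a := by
    have h1 : -Real.log (b - a) < (n₀ : ℝ) * δ := by
      have := (div_lt_iff₀ hδ).mp hn₀; linarith
    calc Real.exp (-(n₀ : ℝ) * δ) < Real.exp (Real.log (b - a)) :=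
          Real.exp_lt_exp.mpr (by linarith)
      _ = b - a := Real.exp_log (by linarith)
  have hM : packM f K ⇑φ ε s N' = ⊤ := iInf_eq_top.mp h N'
  have hlt : ENNReal.ofReal a < packM f K ⇑φ ε s N' := hM ▸ ENNReal.ofReal_lt_top
  simp only [packM] at hlt
  obtain ⟨t, ⟨c, m, I, hIm, hdisj, rfl⟩, hta⟩ := lt_sSup_iff.mp hlt
  rw [ENNReal.tsum_eq_iSup_sum] at hta
  obtain ⟨F, hF⟩ := lt_iSup_iff.mp hta
  set g : ℕ → ℝ := fun j => Real.exp (-s * (m j : ℝ) + birk f ⇑φ (m j) (c j)) with hg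
  set J₀ : Finset ℕ := F.image Subtype.val with hJ₀
  have hJ₀I : ∀ j ∈ J₀, j ∈ I := by
    intro j hj
    obtain ⟨i, _, rfl⟩ := Finset.mem_image.mp hj
    exact i.2
  have hsum_eq : ∑ i ∈ F, ENNReal.ofReal (g i.1) = ENNReal.ofReal (∑ j ∈ J₀, g j) := by
    rw [ENNReal.ofReal_sum_of_nonneg (fun j _ => (Real.exp_pos _).le),
      Finset.sum_image (fun x _ y _ h => Subtype.ext h)]
  have haJ₀ : a < ∑ j ∈ J₀, g j := by
    rw [hsum_eq] at hF
    exact (ENNReal.ofReal_lt_ofReal_iff_of_nonneg ha).mp hF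
  have hterm : ∀ j ∈ J₀, g j < b - a := by
    intro j hj
    have hmj : n₀ ≤ m j := le_trans (le_max_right N n₀) (hIm j (hJ₀I j hj)).2
    have hbirk : birk f ⇑φ (m j) (c j) ≤ (m j : ℝ) * ‖φ‖ := by
      rw [birk]
      calc ∑ i ∈ Finset.range (m j), φ (traj f i (c j))
          ≤ ∑ i ∈ Finset.range (m j), ‖φ‖ := by
            refine Finset.sum_le_sum fun i _ => ?_
            exact le_trans (le_abs_self _) (φ.norm_coe_le_norm _)
        _ = (m j : ℝ) * ‖φ‖ := by simp [mul_comm]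
    have hexp : -s * (m j : ℝ) + birk f ⇑φ (m j) (c j) ≤ -(n₀ : ℝ) * δ := by
      have : (n₀ : ℝ) * δ ≤ (m j : ℝ) * δ := by
        have : (n₀ : ℝ) ≤ (m j : ℝ) := Nat.cast_le.mpr hmj
        nlinarith
      rw [hδdef] at this ⊢
      nlinarith
    calc g j ≤ Real.exp (-(n₀ : ℝ) * δ) := Real.exp_le_exp.mpr hexp
      _ < b - a := hbound
  obtain ⟨J', hsub, h1, h2⟩ := exists_subset_sum_mem_Ioo ha g J₀
    (fun j _ => Real.exp_pos _) hterm haJ₀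
  refine ⟨J', c, m, ?_, ?_, h1, h2⟩
  · intro i hi
    have := hIm i (hJ₀I i (hsub hi))
    exact ⟨this.1, le_trans (le_max_left N n₀) this.2⟩
  · exact hdisj.subset (fun j hj => hJ₀I j (hsub hj))
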